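/- arXiv:1410.3335 — 2 statements merged into one kernel-verified Lean document; each statement's English description precedes it below -/
import Mathlib

section
/- Assume y₀ lies in the column space of U, i.e., y₀ = UUᵀy₀, and that AU − UB = wqᵀ for a vector w ∈ ℝⁿ and a unit vector q ∈ ℝʳ. Then the Lyapunov residual satisfies R₁(U) = ‖A(UZUᵀ) + (UZUᵀ)Aᵀ + y₀y₀ᵀ‖_F = √2 · ‖w‖ · ‖Zᵀq‖, where ‖w‖ and ‖Zᵀq‖ are Euclidean norms of vectors. -/
open Matrix MeasureTheory
open scoped Kronecker

/-- Matrix exponential over ℝ. -/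
noncomputable def mexp {k : ℕ} (M : Matrix (Fin k) (Fin k) ℝ) : Matrix (Fin k) (Fin k) ℝ :=
  NormedSpace.exp M

/-- A real square matrix is stable if every complex eigenvalue has negative real part. -/
def IsStableMat {k : ℕ} (M : Matrix (Fin k) (Fin k) ℝ) : Prop :=
  ∀ μ ∈ spectrum ℂ (M.map (algebraMap ℝ ℂ)), μ.re < 0

/-- Frobenius norm of a real matrix. -/
noncomputable def frobNorm {m l : Type*} [Fintype m] [Fintype l] (M : Matrix m l ℝ) : ℝ :=
  Real.sqrt (∑ i, ∑ j, (M i j) ^ 2)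

/-- Euclidean norm of a real vector. -/
noncomputable def euclNorm {m : Type*} [Fintype m] (v : m → ℝ) : ℝ :=
  Real.sqrt (∑ i, (v i) ^ 2)

namespace LyapAux

open Polynomial

variable {k : ℕ}

lemma charpoly_eval (M : Matrix (Fin k) (Fin k) ℂ) (μ : ℂ) :
    M.charpoly.eval μ = (Matrix.scalar (Fin k) μ - M).det := by
  rw [Matrix.charpoly, _root_.eval_det, Matrix.matPolyEquiv_charmatrix]
  simp

lemma mem_spectrum_iff_det (M : Matrix (Fin k) (Fin k) ℂ) (μ : ℂ) :
    μ ∈ spectrum ℂ M ↔ (Matrix.scalar (Fin k) μ - M).det = 0 := by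
  have halg : (algebraMap ℂ (Matrix (Fin k) (Fin k) ℂ)) μ = Matrix.scalar (Fin k) μ := by
    rw [Matrix.scalar_apply, Matrix.algebraMap_eq_diagonal]
    rfl
  rw [spectrum.mem_iff, halg, Matrix.isUnit_iff_isUnit_det, isUnit_iff_ne_zero, not_not]

lemma mem_spectrum_iff_root (M : Matrix (Fin k) (Fin k) ℂ) (μ : ℂ) :
    μ ∈ spectrum ℂ M ↔ M.charpoly.eval μ = 0 := by
  rw [mem_spectrum_iff_det, charpoly_eval]

lemma aeval_mul_eq_mul_aeval (C D W : Matrix (Fin k) (Fin k) ℂ)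
    (h : C * W = W * D) (p : ℂ[X]) :
    (aeval C p) * W = W * (aeval D p) := by
  have hpow : ∀ m : ℕ, C ^ m * W = W * D ^ m := by
    intro m
    induction m with
    | zero => simp
    | succ m ih =>
      rw [pow_succ, pow_succ, mul_assoc, h, ← mul_assoc, ih, mul_assoc]
  induction p using Polynomial.induction_on' with
  | add p q hp hq => simp [map_add, add_mul, mul_add, hp, hq]
  | monomial m a =>
    rw [aeval_monomial, aeval_monomial, mul_assoc, hpow, ← mul_assoc,
      Algebra.commutes a W, mul_assoc]

lemma sylvester_zero (C D W : Matrix (Fin k) (Fin k) ℂ)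
    (h : C * W = W * D)
    (hsep : ∀ μ ∈ spectrum ℂ D, C.charpoly.eval μ ≠ 0) : W = 0 := by
  rcases Nat.eq_zero_or_pos k with hk | hk
  · subst hk; exact Subsingleton.elim _ _
  have h0 : W * (aeval D C.charpoly) = 0 := by
    rw [← aeval_mul_eq_mul_aeval C D W h, Matrix.aeval_self_charpoly, zero_mul]
  have hu : IsUnit (aeval D C.charpoly) := by
    rw [← spectrum.zero_notMem_iff ℂ]
    rw [spectrum.map_polynomial_aeval_of_degree_pos D C.charpoly
      (by rw [Matrix.charpoly_degree_eq_dim, Fintype.card_fin]; exact_mod_cast hk)]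
    rintro ⟨μ, hμ, hev⟩
    exact hsep μ hμ hev
  obtain ⟨u, hu⟩ := hu
  have h2 : W * (aeval D C.charpoly) * (↑u⁻¹ : Matrix (Fin k) (Fin k) ℂ) = 0 := by
    rw [h0, zero_mul]
  rwa [← hu, mul_assoc, Units.mul_inv, mul_one] at h2

/-- If `B` is stable and `B * W + W * Bᵀ = 0` then `W = 0` (uniqueness of the
Lyapunov solution), specialized to `W = Z - Zᵀ`. -/
lemma lyap_symm {r : ℕ} (B Z : Matrix (Fin r) (Fin r) ℝ)
    (hB : ∀ μ ∈ spectrum ℂ (B.map (algebraMap ℝ ℂ)), μ.re < 0)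
    (h : B * (Z - Zᵀ) + (Z - Zᵀ) * Bᵀ = 0) : Zᵀ = Z := by
  set φ : ℝ →+* ℂ := algebraMap ℝ ℂ with hφ
  set Cm : Matrix (Fin r) (Fin r) ℂ := B.map φ with hCm
  have hreal : B * (Z - Zᵀ) = (Z - Zᵀ) * (-Bᵀ) := by
    rw [mul_neg]
    exact eq_neg_of_add_eq_zero_left h
  have hmapneg : (-Bᵀ).map φ = -(Cm)ᵀ := by
    ext i j
    simp [hCm, Matrix.map_apply]
  have hc : Cm * ((Z - Zᵀ).map φ) = ((Z - Zᵀ).map φ) * (-(Cm)ᵀ) := by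
    rw [← hmapneg, ← Matrix.map_mul, ← Matrix.map_mul, hreal]
  have hsep : ∀ μ ∈ spectrum ℂ (-(Cm)ᵀ), Cm.charpoly.eval μ ≠ 0 := by
    intro μ hμ hev
    have h1 : μ.re < 0 := hB μ ((mem_spectrum_iff_root Cm μ).mpr hev)
    have h2 : (Matrix.scalar (Fin r) μ - -(Cm)ᵀ).det = 0 :=
      (mem_spectrum_iff_det _ μ).mp hμ
    have h3 : Matrix.scalar (Fin r) μ - -(Cm)ᵀ = (-(Matrix.scalar (Fin r) (-μ) - Cm))ᵀ := by
      ext i j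
      rcases eq_or_ne i j with rfl | hij
      · simp [Matrix.scalar_apply, Matrix.diagonal_apply]
        ring
      · simp [Matrix.scalar_apply, Matrix.diagonal_apply, hij, Ne.symm hij]
    rw [h3, Matrix.det_transpose, Matrix.det_neg] at h2
    have h4 : (Matrix.scalar (Fin r) (-μ) - Cm).det = 0 := by
      rcases mul_eq_zero.mp h2 with h5 | h5
      · exact absurd h5 (pow_ne_zero _ (by norm_num))
      · exact h5
    have h6 : (-μ).re < 0 := hB (-μ) ((mem_spectrum_iff_det Cm (-μ)).mpr h4)
    simp only [Complex.neg_re] at h6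
    linarith
  have hW : (Z - Zᵀ).map φ = 0 := sylvester_zero Cm (-(Cm)ᵀ) _ hc hsep
  have hZZ : Z - Zᵀ = 0 := by
    ext i j
    have h7 := congrFun (congrFun hW i) j
    simp only [Matrix.map_apply, Matrix.zero_apply, hφ, Matrix.sub_apply,
      Matrix.transpose_apply] at h7
    simp only [Matrix.sub_apply, Matrix.zero_apply, Matrix.transpose_apply]
    rwa [show (algebraMap ℝ ℂ) (Z i j - Z j i) = ((Z i j - Z j i : ℝ) : ℂ) from rfl,
      Complex.ofReal_eq_zero] at h7
  exact (sub_eq_zero.mp hZZ).symm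

lemma mul_vecMulVec {m n l : Type*} [Fintype n] (M : Matrix m n ℝ) (a : n → ℝ) (b : l → ℝ) :
    M * vecMulVec a b = vecMulVec (M *ᵥ a) b := by
  ext i j
  simp [Matrix.mul_apply, vecMulVec_apply, Matrix.mulVec, dotProduct,
    Finset.sum_mul, mul_assoc]

lemma vecMulVec_mul {m n l : Type*} [Fintype n] (a : m → ℝ) (b : n → ℝ) (M : Matrix n l ℝ) :
    vecMulVec a b * M = vecMulVec a (Mᵀ *ᵥ b) := by
  ext i j
  simp [Matrix.mul_apply, vecMulVec_apply, Matrix.mulVec, dotProduct,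
    Finset.mul_sum, mul_comm, mul_left_comm]

lemma vecMulVec_transpose {m n : Type*} (a : m → ℝ) (b : n → ℝ) :
    (vecMulVec a b)ᵀ = vecMulVec b a := by
  ext i j
  simp [vecMulVec_apply, mul_comm]

end LyapAux

theorem lyapunov_residual_rank_one_formula {n r : ℕ}
    (A : Matrix (Fin n) (Fin n) ℝ) (y₀ : Fin n → ℝ)
    (hA : IsStableMat A)
    (U : Matrix (Fin n) (Fin r) ℝ) (hU : Uᵀ * U = 1)
    (hB : IsStableMat (Uᵀ * A * U))
    (hy : y₀ = U *ᵥ (Uᵀ *ᵥ y₀))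
    (Z : Matrix (Fin r) (Fin r) ℝ)
    (hZ : (Uᵀ * A * U) * Z + Z * (Uᵀ * A * U)ᵀ = -vecMulVec (Uᵀ *ᵥ y₀) (Uᵀ *ᵥ y₀))
    (w : Fin n → ℝ) (q : Fin r → ℝ) (hq : euclNorm q = 1)
    (hwq : A * U - U * (Uᵀ * A * U) = vecMulVec w q) :
    frobNorm (A * (U * Z * Uᵀ) + (U * Z * Uᵀ) * Aᵀ + vecMulVec y₀ y₀)
      = Real.sqrt 2 * euclNorm w * euclNorm (Zᵀ *ᵥ q) := by
  set B : Matrix (Fin r) (Fin r) ℝ := Uᵀ * A * U with hBdef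
  set c : Fin r → ℝ := Uᵀ *ᵥ y₀ with hcdef
  set v : Fin r → ℝ := Zᵀ *ᵥ q with hvdef
  set x : Fin n → ℝ := U *ᵥ v with hxdef
  set E : Matrix (Fin n) (Fin r) ℝ := vecMulVec w q with hEdef
  have hAU : A * U = U * B + E := by rw [← hwq]; noncomm_ring
  -- Step 1: Uᵀ w = 0
  have hUE : Uᵀ * E = 0 := by
    have h1 : Uᵀ * (A * U) - Uᵀ * (U * B) = Uᵀ * E := by rw [← hwq, Matrix.mul_sub]
    rw [← Matrix.mul_assoc, ← Matrix.mul_assoc, hU, Matrix.one_mul, ← hBdef, sub_self] at h1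
    exact h1.symm
  have hqne : ∃ j, q j ≠ 0 := by
    by_contra hcon
    push_neg at hcon
    have : euclNorm q = 0 := by
      simp [euclNorm, hcon]
    rw [hq] at this; norm_num at this
  have hUw : Uᵀ *ᵥ w = 0 := by
    obtain ⟨j, hj⟩ := hqne
    funext i
    have h2 : (Uᵀ * E) i j = 0 := by rw [hUE]; rfl
    rw [hEdef, LyapAux.mul_vecMulVec, vecMulVec_apply] at h2
    have h3 := (mul_eq_zero.mp h2).resolve_right hj
    simpa using h3
  -- Step 2: Z is symmetric
  have hsymm : Zᵀ = Z := by
    apply LyapAux.lyap_symm B Z hB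
    have h2 := congrArg Matrix.transpose hZ
    rw [Matrix.transpose_add (B * Z) (Z * Bᵀ), Matrix.transpose_mul B Z,
      Matrix.transpose_mul Z Bᵀ, Matrix.transpose_transpose, Matrix.transpose_neg,
      LyapAux.vecMulVec_transpose] at h2
    calc B * (Z - Zᵀ) + (Z - Zᵀ) * Bᵀ
        = (B * Z + Z * Bᵀ) - (Zᵀ * Bᵀ + B * Zᵀ) := by
          simp only [Matrix.mul_sub, Matrix.sub_mul]
          abel
      _ = 0 := by rw [hZ, h2, sub_self]
  -- Step 3: residual identity
  have hAUT : Uᵀ * Aᵀ = Bᵀ * Uᵀ + Eᵀ := by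
    have := congrArg Matrix.transpose hAU
    rw [Matrix.transpose_mul, Matrix.transpose_add, Matrix.transpose_mul] at this
    exact this
  have hyc : vecMulVec y₀ y₀ = U * (vecMulVec c c) * Uᵀ := by
    have h1 : U * (vecMulVec c c) * Uᵀ = vecMulVec (U *ᵥ c) (U *ᵥ c) := by
      rw [LyapAux.mul_vecMulVec, LyapAux.vecMulVec_mul, Matrix.transpose_transpose]
    rw [hy, h1]
  have hres : A * (U * Z * Uᵀ) + (U * Z * Uᵀ) * Aᵀ + vecMulVec y₀ y₀
      = vecMulVec w x + vecMulVec x w := by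
    have e1 : A * (U * Z * Uᵀ) = (A * U) * (Z * Uᵀ) := by
      simp only [Matrix.mul_assoc]
    have e2 : (U * Z * Uᵀ) * Aᵀ = (U * Z) * (Uᵀ * Aᵀ) := by
      simp only [Matrix.mul_assoc]
    rw [e1, e2, hAU, hAUT, hyc]
    have e3 : (U * B + E) * (Z * Uᵀ) + U * Z * (Bᵀ * Uᵀ + Eᵀ) + U * vecMulVec c c * Uᵀ
        = U * (B * Z + Z * Bᵀ + vecMulVec c c) * Uᵀ + E * (Z * Uᵀ) + (U * Z) * Eᵀ := by
      simp only [Matrix.add_mul, Matrix.mul_add, Matrix.mul_assoc]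
      abel
    rw [e3, hZ]
    have e4 : U * (-vecMulVec c c + vecMulVec c c) * Uᵀ = 0 := by
      rw [neg_add_cancel, Matrix.mul_zero, Matrix.zero_mul]
    rw [e4, zero_add]
    congr 1
    · rw [hEdef, LyapAux.vecMulVec_mul, Matrix.transpose_mul, Matrix.transpose_transpose,
        ← Matrix.mulVec_mulVec, hxdef, hvdef]
    · rw [hEdef, LyapAux.vecMulVec_transpose, LyapAux.mul_vecMulVec,
        ← Matrix.mulVec_mulVec, hxdef, hvdef, hsymm]
  rw [hres]
  -- Step 4: norm computation
  have hwx : ∑ i, w i * x i = 0 := by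
    have : ∑ i, w i * x i = (Uᵀ *ᵥ w) ⬝ᵥ v := by
      rw [hxdef]
      rw [show (Uᵀ *ᵥ w) ⬝ᵥ v = w ᵥ* U ⬝ᵥ v from by rw [← Matrix.mulVec_transpose]]
      rw [← Matrix.dotProduct_mulVec]
      rfl
    rw [this, hUw, zero_dotProduct]
  have hxv : ∑ i, x i ^ 2 = ∑ i, v i ^ 2 := by
    have h1 : ∑ i, x i ^ 2 = x ⬝ᵥ x := by simp [dotProduct, sq]
    have h2 : ∑ i, v i ^ 2 = v ⬝ᵥ v := by simp [dotProduct, sq]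
    rw [h1, h2, hxdef]
    rw [show (U *ᵥ v) ⬝ᵥ (U *ᵥ v) = ((U *ᵥ v) ᵥ* U) ⬝ᵥ v from Matrix.dotProduct_mulVec _ _ _]
    rw [show (U *ᵥ v) ᵥ* U = (v ᵥ* Uᵀ) ᵥ* U from by rw [Matrix.vecMul_transpose]]
    rw [Matrix.vecMul_vecMul, hU, Matrix.vecMul_one]
  have expand : ∑ i, ∑ j, ((vecMulVec w x + vecMulVec x w) i j) ^ 2
      = 2 * (∑ i, w i ^ 2) * (∑ j, x j ^ 2) + 2 * (∑ i, w i * x i) ^ 2 := by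
    calc ∑ i, ∑ j, ((vecMulVec w x + vecMulVec x w) i j) ^ 2
        = ∑ i, ∑ j, (w i ^ 2 * x j ^ 2 + x i ^ 2 * w j ^ 2
            + (2 * (w i * x i)) * (w j * x j)) := by
          refine Finset.sum_congr rfl fun i _ => Finset.sum_congr rfl fun j _ => ?_
          simp only [Matrix.add_apply, vecMulVec_apply]
          ring
      _ = (∑ i, ∑ j, w i ^ 2 * x j ^ 2) + (∑ i, ∑ j, x i ^ 2 * w j ^ 2)
            + ∑ i, ∑ j, (2 * (w i * x i)) * (w j * x j) := by
          simp only [Finset.sum_add_distrib]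
      _ = (∑ i, w i ^ 2) * (∑ j, x j ^ 2) + (∑ i, x i ^ 2) * (∑ j, w j ^ 2)
            + (∑ i, 2 * (w i * x i)) * (∑ j, w j * x j) := by
          rw [← Finset.sum_mul_sum, ← Finset.sum_mul_sum, ← Finset.sum_mul_sum]
      _ = 2 * (∑ i, w i ^ 2) * (∑ j, x j ^ 2) + 2 * (∑ i, w i * x i) ^ 2 := by
          rw [← Finset.mul_sum]
          ring
  simp only [frobNorm, euclNorm]
  rw [expand, hwx]
  have hw2 : (0:ℝ) ≤ ∑ i, w i ^ 2 := Finset.sum_nonneg fun i _ => sq_nonneg _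
  have hx2 : (0:ℝ) ≤ ∑ j, x j ^ 2 := Finset.sum_nonneg fun i _ => sq_nonneg _
  rw [show (2:ℝ) * (∑ i, w i ^ 2) * (∑ j, x j ^ 2) + 2 * 0 ^ 2
      = 2 * ((∑ i, w i ^ 2) * (∑ j, x j ^ 2)) from by ring]
  rw [Real.sqrt_mul (by norm_num), Real.sqrt_mul hw2, hxv]
  rw [mul_assoc]
end

section
/- Define, for an n×r matrix V, the function Φ(V) = tr X + tr Z(V) − 2 tr(Vᵀ P(V)), where B(V) = VᵀAV, c₀(V) = Vᵀy₀, Z(V) solves B(V)Z + Z B(V)ᵀ = −c₀(V)c₀(V)ᵀ, and P(V) solves A P + P B(V)ᵀ = −y₀ c₀(V)ᵀ. Let U be an n×r matrix with orthonormal columns such that B = B(U) is stable, let Z = Z(U), P = P(U), c₀ = c₀(U), and let P_U solve Aᵀ P_U + P_U B = −U and Z_I solve Bᵀ Z_I + Z_I B = −I_r. Then for every n×r direction matrix D, the derivative of ε ↦ Φ(U + εD) at ε = 0 exists and equals tr(Dᵀ G), where G = −2P + 2 y₀ (c₀ᵀ Z_I − y₀ᵀ P_U) + 2 A U (Z Z_I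 − Pᵀ P_U) + 2 Aᵀ U (Z_I Z − P_Uᵀ P). -/
open Matrix MeasureTheory
open scoped Kronecker

namespace PhiGrad

open Polynomial

variable {ι κ : Type*} [Fintype ι] [DecidableEq ι] [Fintype κ] [DecidableEq κ]

lemma charpoly_eval (M : Matrix ι ι ℂ) (μ : ℂ) :
    (M.charpoly).eval μ = (μ • (1 : Matrix ι ι ℂ) - M).det := by
  rw [Matrix.charpoly, ← Polynomial.coe_evalRingHom, RingHom.map_det]
  congr 1
  ext i j
  by_cases h : i = j <;>
    simp [Matrix.charmatrix_apply, Matrix.one_apply, h, Matrix.diagonal_apply]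

lemma mem_spectrum_of_root (M : Matrix ι ι ℂ) {μ : ℂ} (h : (M.charpoly).eval μ = 0) :
    μ ∈ spectrum ℂ M := by
  rw [spectrum.mem_iff]
  intro hu
  rw [Algebra.algebraMap_eq_smul_one] at hu
  have := (Matrix.isUnit_iff_isUnit_det _).mp hu
  rw [charpoly_eval] at h
  rw [h] at this
  exact not_isUnit_zero this

lemma isUnit_aeval_prod (N : Matrix ι ι ℂ) (s : Multiset ℂ) (h : ∀ μ ∈ s, μ ∉ spectrum ℂ N) :
    IsUnit (aeval N ((s.map (fun a => X - C a)).prod)) := by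
  induction s using Multiset.induction with
  | empty => simp
  | cons a s ih =>
    rw [Multiset.map_cons, Multiset.prod_cons, _root_.map_mul]
    refine IsUnit.mul ?_ (ih fun μ hμ => h μ (Multiset.mem_cons_of_mem hμ))
    have ha := (spectrum.notMem_iff).mp (h a (Multiset.mem_cons_self a s))
    have : (aeval N) (X - C a) = -(algebraMap ℂ (Matrix ι ι ℂ) a - N) := by
      simp [map_sub, aeval_X, aeval_C]
    rw [this]
    exact ha.neg

lemma aeval_comm (M : Matrix ι ι ℂ) (N : Matrix κ κ ℂ) (Y : Matrix ι κ ℂ)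
    (h : M * Y = Y * N) (f : ℂ[X]) : aeval M f * Y = Y * aeval N f := by
  induction f using Polynomial.induction_on with
  | C a => simp [aeval_C, Algebra.algebraMap_eq_smul_one, Matrix.smul_mul, Matrix.mul_smul]
  | add f g hf hg => simp only [map_add, Matrix.add_mul, Matrix.mul_add, hf, hg]
  | monomial n a hf =>
    have h1 : (C a * X ^ (n + 1)) = (C a * X ^ n) * X := by ring
    rw [h1, _root_.map_mul (aeval M) (C a * X ^ n) X, _root_.map_mul (aeval N) (C a * X ^ n) X,
      aeval_X, aeval_X, Matrix.mul_assoc, h, ← Matrix.mul_assoc, hf, Matrix.mul_assoc]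

lemma sylvester_complex (M : Matrix ι ι ℂ) (N : Matrix κ κ ℂ)
    (hdisj : ∀ μ ∈ spectrum ℂ M, μ ∉ spectrum ℂ N)
    (Y : Matrix ι κ ℂ) (h : M * Y = Y * N) : Y = 0 := by
  have hmon := Matrix.charpoly_monic M
  have hsplit : M.charpoly.Splits := IsAlgClosed.splits _
  have hprod := hsplit.eq_prod_roots_of_monic hmon
  have hunit : IsUnit (aeval N M.charpoly) := by
    rw [hprod]
    refine isUnit_aeval_prod N M.charpoly.roots fun μ hμ => ?_
    exact hdisj μ (mem_spectrum_of_root M ((Polynomial.mem_roots hmon.ne_zero).mp hμ))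
  have h0 : Y * aeval N M.charpoly = 0 := by
    rw [← aeval_comm M N Y h, Matrix.aeval_self_charpoly, Matrix.zero_mul]
  obtain ⟨u, hu⟩ := hunit
  have h2 : Y * ((↑u : Matrix κ κ ℂ) * (↑u⁻¹ : Matrix κ κ ℂ)) = (0 : Matrix ι κ ℂ) * (↑u⁻¹ : Matrix κ κ ℂ) := by
    rw [← Matrix.mul_assoc, hu, h0]
  rw [u.mul_inv, Matrix.mul_one, Matrix.zero_mul] at h2
  exact h2

lemma spectrum_neg_mem {μ : ℂ} {a : Matrix ι ι ℂ} (h : μ ∈ spectrum ℂ (-a)) :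
    -μ ∈ spectrum ℂ a := by
  rw [spectrum.mem_iff] at h ⊢
  intro hu
  apply h
  have : algebraMap ℂ (Matrix ι ι ℂ) μ - -a = -(algebraMap ℂ (Matrix ι ι ℂ) (-μ) - a) := by
    rw [map_neg]; abel
  rw [this]
  exact hu.neg

lemma spectrum_transpose_mem {μ : ℂ} {a : Matrix ι ι ℂ} (h : μ ∈ spectrum ℂ aᵀ) :
    μ ∈ spectrum ℂ a := by
  rw [spectrum.mem_iff] at h ⊢
  intro hu
  apply h
  have : algebraMap ℂ (Matrix ι ι ℂ) μ - aᵀ = (algebraMap ℂ (Matrix ι ι ℂ) μ - a)ᵀ := by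
    rw [Matrix.transpose_sub]
    congr 1
    rw [Algebra.algebraMap_eq_smul_one, Matrix.transpose_smul, Matrix.transpose_one]
  rw [this, Matrix.isUnit_transpose]
  exact hu

lemma sylvester_real {p q : ℕ} {M : Matrix (Fin p) (Fin p) ℝ} {N : Matrix (Fin q) (Fin q) ℝ}
    (hM : IsStableMat M) (hN : IsStableMat N) {Y : Matrix (Fin p) (Fin q) ℝ}
    (h : M * Y + Y * Nᵀ = 0) : Y = 0 := by
  set f := algebraMap ℝ ℂ
  have hMY : M * Y = -(Y * Nᵀ) := by rw [eq_neg_iff_add_eq_zero]; exact h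
  have h' : M.map f * Y.map f = Y.map f * (-(N.map f)ᵀ) := by
    have e1 : (M * Y).map f = M.map f * Y.map f := Matrix.map_mul
    have e2 : (Y * Nᵀ).map f = Y.map f * (N.map f)ᵀ := by
      rw [Matrix.map_mul, Matrix.transpose_map]
    have e3 : ((-(Y * Nᵀ)).map f) = -((Y * Nᵀ).map f) := by
      ext i j; simp only [Matrix.map_apply, Matrix.neg_apply, map_neg]
    rw [← e1, hMY, e3, e2, Matrix.mul_neg]
  have hY : Y.map f = 0 := by
    refine sylvester_complex (M.map f) (-(N.map f)ᵀ) ?_ (Y.map f) h'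
    intro μ hμ hμ'
    have h1 : μ.re < 0 := hM μ hμ
    have h2 : (-μ).re < 0 := hN _ (spectrum_transpose_mem (spectrum_neg_mem hμ'))
    simp only [Complex.neg_re] at h2
    linarith
  ext i j
  have h2 : f (Y i j) = 0 := by
    have := congrFun (congrFun hY i) j
    simpa [Matrix.map_apply] using this
  have h3 : f (Y i j) = f 0 := by rw [h2, map_zero]
  simpa using (algebraMap ℝ ℂ).injective h3



lemma kron_mulVec (M : Matrix ι ι ℝ) (N : Matrix κ κ ℝ) (Y : Matrix ι κ ℝ) (i : ι) (j : κ) :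
    ((M ⊗ₖ (1 : Matrix κ κ ℝ) + (1 : Matrix ι ι ℝ) ⊗ₖ N) *ᵥ
      (fun x : ι × κ => Y x.1 x.2)) (i, j) = (M * Y + Y * Nᵀ) i j := by
  simp only [Matrix.mulVec, Matrix.add_apply, Matrix.mul_apply, dotProduct,
    Fintype.sum_prod_type, Matrix.kroneckerMap_apply, Matrix.one_apply,
    Matrix.transpose_apply, add_mul, Finset.sum_add_distrib, ite_mul, one_mul, zero_mul,
    mul_ite, mul_one, mul_zero]
  congr 1
  · refine Finset.sum_congr rfl fun k _ => ?_
    rw [Finset.sum_ite_eq Finset.univ j (fun x_1 => M i k * Y k x_1)]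
    simp
  · have hpull : ∀ x : ι, (∑ x_1 : κ, if i = x then N j x_1 * Y x x_1 else 0)
        = if i = x then ∑ x_1 : κ, N j x_1 * Y x x_1 else 0 := by
      intro x; split <;> simp
    rw [Finset.sum_congr rfl (fun x _ => hpull x),
      Finset.sum_ite_eq Finset.univ i (fun x => ∑ x_1 : κ, N j x_1 * Y x x_1)]
    simp [mul_comm]

/-- Differentiability (at 0) of the determinant of a matrix of functions. -/
lemma differentiableAt_det {g : ℝ → Matrix ι ι ℝ}
    (h : ∀ i j, DifferentiableAt ℝ (fun ε => g ε i j) 0) :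
    DifferentiableAt ℝ (fun ε => (g ε).det) 0 := by
  simp only [Matrix.det_apply, Units.smul_def, zsmul_eq_mul]
  apply DifferentiableAt.fun_sum
  intro σ _
  have : DifferentiableAt ℝ (fun ε => ∏ i, g ε (σ i) i) 0 :=
    DifferentiableAt.fun_finsetProd (fun i _ => h (σ i) i)
  exact this.const_mul _

lemma implicit_linear {K : ℝ → Matrix ι ι ℝ} {K' : Matrix ι ι ℝ} {b : ℝ → ι → ℝ} {b' : ι → ℝ}
    {w : ℝ → ι → ℝ}
    (hK : ∀ i j, HasDerivAt (fun ε => K ε i j) (K' i j) 0)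
    (hb : ∀ i, HasDerivAt (fun ε => b ε i) (b' i) 0)
    (hu : IsUnit (K 0))
    (heq : ∀ᶠ ε in nhds (0 : ℝ), K ε *ᵥ w ε = b ε) :
    ∃ w' : ι → ℝ, K 0 *ᵥ w' + K' *ᵥ w 0 = b' ∧ ∀ i, HasDerivAt (fun ε => w ε i) (w' i) 0 := by
  have hdet0 : (K 0).det ≠ 0 := by
    have := (Matrix.isUnit_iff_isUnit_det _).mp hu
    exact IsUnit.ne_zero this
  have hdetd : DifferentiableAt ℝ (fun ε => (K ε).det) 0 :=
    differentiableAt_det (fun i j => (hK i j).differentiableAt)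
  have hne : ∀ᶠ ε in nhds (0 : ℝ), (K ε).det ≠ 0 :=
    hdetd.continuousAt.eventually_ne hdet0
  -- eventually w has explicit formula
  have hwf : ∀ᶠ ε in nhds (0 : ℝ), ∀ i, w ε i = ((K ε).adjugate *ᵥ b ε) i / (K ε).det := by
    filter_upwards [heq, hne] with ε h1 h2 i
    have hKinv : (K ε)⁻¹ *ᵥ (K ε *ᵥ w ε) = w ε := by
      rw [Matrix.mulVec_mulVec, Matrix.nonsing_inv_mul _ (isUnit_iff_ne_zero.mpr h2),
        Matrix.one_mulVec]
    rw [h1] at hKinv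
    rw [← hKinv, Matrix.inv_def, Ring.inverse_eq_inv', Matrix.smul_mulVec,
      Pi.smul_apply, smul_eq_mul, div_eq_inv_mul]
  have hwd : ∀ i, DifferentiableAt ℝ (fun ε => w ε i) 0 := by
    intro i
    have hev : (fun ε => w ε i) =ᶠ[nhds (0:ℝ)] fun ε => ((K ε).adjugate *ᵥ b ε) i / (K ε).det :=
      hwf.mono fun ε hε => hε i
    rw [Filter.EventuallyEq.differentiableAt_iff hev]
    apply DifferentiableAt.div _ hdetd hdet0
    apply DifferentiableAt.fun_sum
    intro j _
    refine DifferentiableAt.mul ?_ (hb j).differentiableAt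
    -- adjugate entry
    rw [show (fun ε => (K ε).adjugate i j) = fun ε => ((K ε).updateRow j (Pi.single i 1)).det by
      funext ε; rw [Matrix.adjugate_apply]]
    apply differentiableAt_det
    intro a c
    by_cases haj : a = j
    · simp only [haj, Matrix.updateRow_self]
      exact differentiableAt_const _
    · simp only [Matrix.updateRow_ne haj]
      exact (hK a c).differentiableAt
  set w' : ι → ℝ := fun i => deriv (fun ε => w ε i) 0 with hw'
  have hder : ∀ i, HasDerivAt (fun ε => w ε i) (w' i) 0 := fun i => (hwd i).hasDerivAt
  refine ⟨w', ?_, hder⟩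
  funext i
  have hF : HasDerivAt (fun ε => (K ε *ᵥ w ε) i)
      (∑ j, (K' i j * w 0 j + K 0 i j * w' j)) 0 := by
    simp only [Matrix.mulVec, dotProduct]
    exact HasDerivAt.fun_sum fun j _ => (hK i j).fun_mul (hder j)
  have hF' : HasDerivAt (fun ε => b ε i) (∑ j, (K' i j * w 0 j + K 0 i j * w' j)) 0 :=
    hF.congr_of_eventuallyEq (heq.mono fun ε hε => (congrFun hε i).symm)
  have := hF'.unique (hb i)
  rw [← this]
  simp only [Pi.add_apply, Matrix.mulVec, dotProduct, Finset.sum_add_distrib]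
  rw [add_comm]

/-- entrywise derivative at 0 of matrix-valued function -/
def EDeriv {l m : Type*} (f : ℝ → Matrix l m ℝ) (f' : Matrix l m ℝ) : Prop :=
  ∀ i j, HasDerivAt (fun ε => f ε i j) (f' i j) 0

def VDeriv {l : Type*} (f : ℝ → l → ℝ) (f' : l → ℝ) : Prop :=
  ∀ i, HasDerivAt (fun ε => f ε i) (f' i) 0

namespace EDeriv

variable {l m o κ : Type*}

lemma congr_deriv {f : ℝ → Matrix l m ℝ} {f' f'' : Matrix l m ℝ} (h : EDeriv f f')
    (e : f' = f'') : EDeriv f f'' := e ▸ h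

lemma const (C : Matrix l m ℝ) : EDeriv (fun _ => C) 0 :=
  fun i j => hasDerivAt_const 0 (C i j)

lemma add {f g : ℝ → Matrix l m ℝ} {f' g'} (hf : EDeriv f f') (hg : EDeriv g g') :
    EDeriv (fun ε => f ε + g ε) (f' + g') :=
  fun i j => ((hf i j).add (hg i j))

lemma neg {f : ℝ → Matrix l m ℝ} {f'} (hf : EDeriv f f') :
    EDeriv (fun ε => -(f ε)) (-f') := fun i j => (hf i j).neg

lemma transpose {f : ℝ → Matrix l m ℝ} {f'} (hf : EDeriv f f') :
    EDeriv (fun ε => (f ε)ᵀ) f'ᵀ := fun i j => hf j i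

lemma mul [Fintype m] {f : ℝ → Matrix l m ℝ} {g : ℝ → Matrix m o ℝ} {f' g'}
    (hf : EDeriv f f') (hg : EDeriv g g') :
    EDeriv (fun ε => f ε * g ε) (f' * g 0 + f 0 * g') := by
  intro i j
  have h : HasDerivAt (fun ε => ∑ k, f ε i k * g ε k j)
      (∑ k, (f' i k * g 0 k j + f 0 i k * g' k j)) 0 :=
    HasDerivAt.fun_sum fun k _ => (hf i k).fun_mul (hg k j)
  have e1 : (fun ε => (f ε * g ε) i j) = fun ε => ∑ k, f ε i k * g ε k j := by
    funext ε; rw [Matrix.mul_apply]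
  have e2 : (f' * g 0 + f 0 * g') i j = ∑ k, (f' i k * g 0 k j + f 0 i k * g' k j) := by
    simp [Matrix.add_apply, Matrix.mul_apply, Finset.sum_add_distrib]
  rw [e1, e2]
  exact h

lemma mul_const [Fintype m] {f : ℝ → Matrix l m ℝ} {f'} (hf : EDeriv f f')
    (C : Matrix m o ℝ) : EDeriv (fun ε => f ε * C) (f' * C) := by
  have := hf.mul (g := fun _ => C) (g' := 0) (const C)
  simpa using this

lemma const_mul [Fintype m] {g : ℝ → Matrix m o ℝ} {g'} (hg : EDeriv g g')
    (C : Matrix l m ℝ) : EDeriv (fun ε => C * g ε) (C * g') := by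
  have := (const C).mul hg
  simpa using this

lemma kron_const {f : ℝ → Matrix l m ℝ} {f'} (hf : EDeriv f f') (C : Matrix o κ ℝ) :
    EDeriv (fun ε => f ε ⊗ₖ C) (f' ⊗ₖ C) := by
  intro i j
  exact (hf i.1 j.1).mul_const (C i.2 j.2)

lemma const_kron {f : ℝ → Matrix o κ ℝ} {f'} (hf : EDeriv f f') (C : Matrix l m ℝ) :
    EDeriv (fun ε => C ⊗ₖ f ε) (C ⊗ₖ f') := by
  intro i j
  exact (hf i.2 j.2).const_mul (C i.1 j.1)

lemma mulVec [Fintype m] {f : ℝ → Matrix l m ℝ} {f'} (hf : EDeriv f f') (y : m → ℝ) :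
    VDeriv (fun ε => f ε *ᵥ y) (f' *ᵥ y) := by
  intro i
  have h : HasDerivAt (fun ε => ∑ k, f ε i k * y k) (∑ k, f' i k * y k) 0 :=
    HasDerivAt.fun_sum fun k _ => (hf i k).mul_const (y k)
  exact h

end EDeriv

lemma VDeriv.vecMulVec {l m : Type*} {c : ℝ → l → ℝ} {d : ℝ → m → ℝ} {c' d'}
    (hc : VDeriv c c') (hd : VDeriv d d') :
    EDeriv (fun ε => Matrix.vecMulVec (c ε) (d ε))
      (Matrix.vecMulVec c' (d 0) + Matrix.vecMulVec (c 0) d') := by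
  intro i j
  have h := (hc i).fun_mul (hd j)
  simpa [Matrix.vecMulVec_apply, Matrix.add_apply] using h

/-- simple helper lemmas about vecMulVec -/
lemma vecMulVec_mul {l m o : Type*} [Fintype m] (a : l → ℝ) (b : m → ℝ) (M : Matrix m o ℝ) :
    Matrix.vecMulVec a b * M = Matrix.vecMulVec a (b ᵥ* M) := by
  ext i j
  simp [Matrix.mul_apply, Matrix.vecMulVec_apply, Matrix.vecMul, dotProduct,
    Finset.mul_sum, mul_assoc]

lemma mul_vecMulVec {l m o : Type*} [Fintype m] (M : Matrix l m ℝ) (a : m → ℝ) (b : o → ℝ) :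
    M * Matrix.vecMulVec a b = Matrix.vecMulVec (M *ᵥ a) b := by
  ext i j
  simp [Matrix.mul_apply, Matrix.vecMulVec_apply, Matrix.mulVec, dotProduct,
    Finset.sum_mul, mul_assoc]

lemma trace_vecMulVec {l : Type*} [Fintype l] (a b : l → ℝ) :
    (Matrix.vecMulVec a b).trace = a ⬝ᵥ b := by
  simp [Matrix.trace, Matrix.diag, Matrix.vecMulVec_apply, dotProduct]

lemma vecMulVec_sub_right {l m : Type*} (a : l → ℝ) (b c : m → ℝ) :
    Matrix.vecMulVec a (b - c) = Matrix.vecMulVec a b - Matrix.vecMulVec a c := by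
  ext i j
  simp [Matrix.vecMulVec_apply, mul_sub]

lemma vecMulVec_transpose {l m : Type*} (a : l → ℝ) (b : m → ℝ) :
    (Matrix.vecMulVec a b)ᵀ = Matrix.vecMulVec b a := by
  ext i j
  simp [Matrix.vecMulVec_apply, mul_comm]



section helpers
variable {n r : ℕ}

lemma vecMulVec_mul' {l m o : Type*} [Fintype m] (a : l → ℝ) (b : m → ℝ) (M : Matrix m o ℝ) :
    Matrix.vecMulVec a b * M = Matrix.vecMulVec a (b ᵥ* M) := by
  ext i j
  simp [Matrix.mul_apply, Matrix.vecMulVec_apply, Matrix.vecMul, dotProduct,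
    Finset.mul_sum, mul_assoc]

lemma mul_vecMulVec' {l m o : Type*} [Fintype m] (M : Matrix l m ℝ) (a : m → ℝ) (b : o → ℝ) :
    M * Matrix.vecMulVec a b = Matrix.vecMulVec (M *ᵥ a) b := by
  ext i j
  simp [Matrix.mul_apply, Matrix.vecMulVec_apply, Matrix.mulVec, dotProduct,
    Finset.sum_mul, mul_assoc]

lemma trace_vecMulVec' {l : Type*} [Fintype l] (a b : l → ℝ) :
    (Matrix.vecMulVec a b).trace = a ⬝ᵥ b := by
  simp [Matrix.trace, Matrix.diag, Matrix.vecMulVec_apply, dotProduct]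

lemma vecMulVec_sub_right' {l m : Type*} (a : l → ℝ) (b c : m → ℝ) :
    Matrix.vecMulVec a (b - c) = Matrix.vecMulVec a b - Matrix.vecMulVec a c := by
  ext i j
  simp [Matrix.vecMulVec_apply, mul_sub]

/-- trace of W * D as trace of Dᵀ * Wᵀ -/
lemma tr_flip {p q : Type*} [Fintype p] [Fintype q] (W : Matrix p q ℝ) (D : Matrix q p ℝ) :
    (W * D).trace = (Dᵀ * Wᵀ).trace := by
  rw [← Matrix.trace_transpose (W * D), Matrix.transpose_mul]

end helpers

set_option maxHeartbeats 2000000 in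
lemma trace_identity {n r : ℕ}
    (A : Matrix (Fin n) (Fin n) ℝ) (U D P P_U Pd : Matrix (Fin n) (Fin r) ℝ)
    (B Z Z_I Zd : Matrix (Fin r) (Fin r) ℝ) (y₀ : Fin n → ℝ) (c₀ cd : Fin r → ℝ)
    (hcd : cd = Dᵀ *ᵥ y₀)
    (R1 : B * Zd + Zd * Bᵀ + ((Dᵀ * A * U + Uᵀ * A * D) * Z + Z * (Dᵀ * A * U + Uᵀ * A * D)ᵀ)
        = -(vecMulVec cd c₀ + vecMulVec c₀ cd))
    (R2 : A * Pd + Pd * Bᵀ + P * (Dᵀ * A * U + Uᵀ * A * D)ᵀ = -vecMulVec y₀ cd)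
    (R3 : Bᵀ * Z_I + Z_I * B = -1)
    (R4 : Aᵀ * P_U + P_U * B = -U)
    (S1 : Zᵀ = Z) (S2 : Z_Iᵀ = Z_I) :
    Zd.trace - 2 * ((Dᵀ * P).trace + (Uᵀ * Pd).trace)
      = (Dᵀ * ((-2 : ℝ) • P
        + (2 : ℝ) • vecMulVec y₀ ((c₀ ᵥ* Z_I) - (y₀ ᵥ* P_U))
        + (2 : ℝ) • (A * U * (Z * Z_I - Pᵀ * P_U))
        + (2 : ℝ) • (Aᵀ * U * (Z_I * Z - P_Uᵀ * P)))).trace := by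
  set Bd : Matrix (Fin r) (Fin r) ℝ := Dᵀ * A * U + Uᵀ * A * D with hBd
  -- atoms
  set t1 := (Dᵀ * (A * U * (Z * Z_I))).trace with ht1
  set t2 := (Dᵀ * (Aᵀ * U * (Z_I * Z))).trace with ht2
  set t3 := cd ⬝ᵥ (c₀ ᵥ* Z_I) with ht3
  set t4 := (Dᵀ * P).trace with ht4
  set t5 := (Dᵀ * (A * U * (Pᵀ * P_U))).trace with ht5
  set t6 := (Dᵀ * (Aᵀ * U * (P_Uᵀ * P))).trace with ht6
  set t7 := cd ⬝ᵥ (y₀ ᵥ* P_U) with ht7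
  -- generic transpose facts
  have hBdT : Bdᵀ = Uᵀ * Aᵀ * D + Dᵀ * Aᵀ * U := by
    rw [hBd, Matrix.transpose_add, Matrix.transpose_mul, Matrix.transpose_mul,
      Matrix.transpose_mul, Matrix.transpose_mul, Matrix.transpose_transpose,
      Matrix.transpose_transpose]
    simp only [Matrix.mul_assoc]
  -- piece C2 : tr((Uᵀ*A*D) * W) with W := Z * Z_I
  have hC2 : ∀ (W : Matrix (Fin r) (Fin r) ℝ),
      ((Uᵀ * A * D) * W).trace = (Dᵀ * (Aᵀ * U * Wᵀ)).trace := by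
    intro W
    rw [Matrix.trace_mul_comm,
      show W * (Uᵀ * A * D) = (W * (Uᵀ * A)) * D by simp only [Matrix.mul_assoc],
      tr_flip, Matrix.transpose_mul, Matrix.transpose_mul, Matrix.transpose_transpose]
  -- step A : Zd.trace in terms of Z_I
  have hA1 : Zd.trace = -(((B * Zd + Zd * Bᵀ) * Z_I).trace) := by
    have e1 : (1 : Matrix (Fin r) (Fin r) ℝ) = -(Bᵀ * Z_I + Z_I * B) := by rw [R3, neg_neg]
    calc Zd.trace = (Zd * 1).trace := by rw [Matrix.mul_one]
      _ = -((Zd * (Bᵀ * Z_I)).trace + (Zd * (Z_I * B)).trace) := by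
          rw [e1, Matrix.mul_neg, Matrix.trace_neg, Matrix.mul_add, Matrix.trace_add]
      _ = -(((B * Zd) * Z_I).trace + ((Zd * Bᵀ) * Z_I).trace) := by
          have g1 : (Zd * (Bᵀ * Z_I)).trace = ((Zd * Bᵀ) * Z_I).trace := by
            rw [Matrix.mul_assoc]
          have g2 : (Zd * (Z_I * B)).trace = ((B * Zd) * Z_I).trace := by
            rw [← Matrix.mul_assoc, Matrix.trace_mul_comm, ← Matrix.mul_assoc]
          rw [g1, g2, add_comm]
      _ = -(((B * Zd + Zd * Bᵀ) * Z_I).trace) := by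
          rw [Matrix.add_mul, Matrix.trace_add]
  have hA2 : B * Zd + Zd * Bᵀ = -(vecMulVec cd c₀ + vecMulVec c₀ cd) - (Bd * Z + Z * Bdᵀ) :=
    eq_sub_of_add_eq R1
  have hZtr : Zd.trace = ((Bd * Z + Z * Bdᵀ) * Z_I).trace
      + ((vecMulVec cd c₀) * Z_I).trace + ((vecMulVec c₀ cd) * Z_I).trace := by
    rw [hA1, hA2, Matrix.sub_mul, Matrix.trace_sub, Matrix.neg_mul, Matrix.trace_neg,
      Matrix.add_mul, Matrix.trace_add]
    ring
  -- tr((Z*Bdᵀ)*Z_I) = tr((Bd*Z)*Z_I)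
  have hsym : ((Z * Bdᵀ) * Z_I).trace = ((Bd * Z) * Z_I).trace := by
    rw [← Matrix.trace_transpose ((Z * Bdᵀ) * Z_I), Matrix.transpose_mul, Matrix.transpose_mul,
      Matrix.transpose_transpose, S1, S2, Matrix.trace_mul_comm, Matrix.mul_assoc]
  -- tr((Bd*Z)*Z_I) = t1 + t2
  have hBZ : ((Bd * Z) * Z_I).trace = t1 + t2 := by
    rw [hBd, Matrix.add_mul, Matrix.add_mul, Matrix.trace_add]
    congr 1
    · rw [ht1]
      simp only [Matrix.mul_assoc]
    · rw [show Uᵀ * A * D * Z * Z_I = (Uᵀ * A * D) * (Z * Z_I) by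
        simp only [Matrix.mul_assoc], hC2 (Z * Z_I), ht2, Matrix.transpose_mul, S1, S2]
  -- the two vecMulVec terms
  have hv1 : ((vecMulVec cd c₀) * Z_I).trace = t3 := by
    rw [vecMulVec_mul', trace_vecMulVec', ht3]
  have hv2 : ((vecMulVec c₀ cd) * Z_I).trace = t3 := by
    rw [vecMulVec_mul', trace_vecMulVec', ht3]
    rw [dotProduct_comm]
    have hZIc : Z_I *ᵥ c₀ = c₀ ᵥ* Z_I := by
      conv_lhs => rw [← S2]
      rw [Matrix.mulVec_transpose]
    rw [← hZIc, ← Matrix.dotProduct_mulVec]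
  have hZfinal : Zd.trace = 2*t1 + 2*t2 + 2*t3 := by
    rw [hZtr, Matrix.add_mul, Matrix.trace_add, hsym, hBZ, hv1, hv2]
    ring
  -- P part
  have hUT : Uᵀ = -(P_Uᵀ * A + Bᵀ * P_Uᵀ) := by
    have h := congrArg Matrix.transpose R4
    rw [Matrix.transpose_add, Matrix.transpose_mul, Matrix.transpose_mul,
      Matrix.transpose_transpose, Matrix.transpose_neg] at h
    rw [h, neg_neg]
  have hPtr : (Uᵀ * Pd).trace = t5 + t6 + t7 := by
    have e1 : (Uᵀ * Pd).trace = -((P_Uᵀ * (A * Pd)).trace + (P_Uᵀ * (Pd * Bᵀ)).trace) := by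
      rw [hUT, Matrix.neg_mul, Matrix.trace_neg, Matrix.add_mul, Matrix.trace_add]
      congr 2
      · rw [Matrix.mul_assoc]
      · rw [Matrix.trace_mul_comm,
          show Pd * (Bᵀ * P_Uᵀ) = (Pd * Bᵀ) * P_Uᵀ by rw [Matrix.mul_assoc],
          Matrix.trace_mul_comm]
    have e2 : A * Pd + Pd * Bᵀ = -vecMulVec y₀ cd - P * Bdᵀ := eq_sub_of_add_eq R2
    have e3 : (Uᵀ * Pd).trace
        = (P_Uᵀ * vecMulVec y₀ cd).trace + (P_Uᵀ * (P * Bdᵀ)).trace := by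
      rw [e1, ← Matrix.trace_add, ← Matrix.mul_add, e2]
      rw [Matrix.mul_sub, Matrix.mul_neg, Matrix.trace_sub, Matrix.trace_neg]
      ring
    have p1 : (P_Uᵀ * vecMulVec y₀ cd).trace = t7 := by
      rw [mul_vecMulVec', trace_vecMulVec', ht7, dotProduct_comm, Matrix.mulVec_transpose]
    have p2 : (P_Uᵀ * (P * Bdᵀ)).trace = t5 + t6 := by
      rw [hBdT, Matrix.mul_add, Matrix.mul_add, Matrix.trace_add]
      congr 1
      · rw [show P_Uᵀ * (P * (Uᵀ * Aᵀ * D)) = (P_Uᵀ * (P * (Uᵀ * Aᵀ))) * D by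
          simp only [Matrix.mul_assoc], tr_flip, ht5]
        congr 1
        rw [Matrix.transpose_mul, Matrix.transpose_mul, Matrix.transpose_mul,
          Matrix.transpose_transpose, Matrix.transpose_transpose, Matrix.transpose_transpose]
        simp only [Matrix.mul_assoc]
      · rw [show P_Uᵀ * (P * (Dᵀ * Aᵀ * U)) = (P_Uᵀ * P) * (Dᵀ * (Aᵀ * U)) by
          simp only [Matrix.mul_assoc], Matrix.trace_mul_comm,
          show (Dᵀ * (Aᵀ * U)) * (P_Uᵀ * P) = Dᵀ * (Aᵀ * U * (P_Uᵀ * P)) by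
          simp only [Matrix.mul_assoc], ht6]
    rw [e3, p1, p2]
    ring
  -- RHS expansion
  have hDy : ∀ w : Fin r → ℝ, (Dᵀ * vecMulVec y₀ w).trace = cd ⬝ᵥ w := by
    intro w
    rw [mul_vecMulVec', trace_vecMulVec', hcd]
  have hG : (Dᵀ * ((-2 : ℝ) • P
        + (2 : ℝ) • vecMulVec y₀ ((c₀ ᵥ* Z_I) - (y₀ ᵥ* P_U))
        + (2 : ℝ) • (A * U * (Z * Z_I - Pᵀ * P_U))
        + (2 : ℝ) • (Aᵀ * U * (Z_I * Z - P_Uᵀ * P)))).trace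
      = -2*t4 + (2*t3 - 2*t7) + (2*t1 - 2*t5) + (2*t2 - 2*t6) := by
    rw [Matrix.mul_add, Matrix.mul_add, Matrix.mul_add,
      Matrix.trace_add, Matrix.trace_add, Matrix.trace_add]
    congr 1
    congr 1
    congr 1
    · rw [Matrix.mul_smul, Matrix.trace_smul, ht4, smul_eq_mul]
    · rw [Matrix.mul_smul, Matrix.trace_smul, vecMulVec_sub_right',
        Matrix.mul_sub, Matrix.trace_sub, hDy, hDy, ht3, ht7, smul_eq_mul]
      ring
    · rw [Matrix.mul_smul, Matrix.trace_smul, Matrix.mul_sub, Matrix.mul_sub,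
        Matrix.trace_sub, ht1, ht5, smul_eq_mul]
      ring
    · rw [Matrix.mul_smul, Matrix.trace_smul, Matrix.mul_sub, Matrix.mul_sub,
        Matrix.trace_sub, ht2, ht6, smul_eq_mul]
      ring
  rw [hZfinal, hPtr, hG, ht4]
  ring


lemma isUnit_kron {p q : ℕ} {M : Matrix (Fin p) (Fin p) ℝ} {N : Matrix (Fin q) (Fin q) ℝ}
    (hM : IsStableMat M) (hN : IsStableMat N) :
    IsUnit (M ⊗ₖ (1 : Matrix (Fin q) (Fin q) ℝ) + (1 : Matrix (Fin p) (Fin p) ℝ) ⊗ₖ N) := by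
  rw [← Matrix.mulVec_injective_iff_isUnit]
  have hker : ∀ u : Fin p × Fin q → ℝ,
      (M ⊗ₖ (1 : Matrix (Fin q) (Fin q) ℝ) + (1 : Matrix (Fin p) (Fin p) ℝ) ⊗ₖ N) *ᵥ u = 0 →
      u = 0 := by
    intro u hu
    set Y : Matrix (Fin p) (Fin q) ℝ := Matrix.of fun i j => u (i, j) with hY
    have h0 : M * Y + Y * Nᵀ = 0 := by
      ext i j
      rw [Matrix.zero_apply, ← kron_mulVec M N Y i j]
      have e : (fun x : Fin p × Fin q => Y x.1 x.2) = u := by funext x; rfl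
      rw [e, hu]
      rfl
    have hY0 := sylvester_real hM hN h0
    funext x
    have := congrFun (congrFun hY0 x.1) x.2
    exact this
  intro u v huv
  have h1 : (M ⊗ₖ (1 : Matrix (Fin q) (Fin q) ℝ) + (1 : Matrix (Fin p) (Fin p) ℝ) ⊗ₖ N)
      *ᵥ (u - v) = 0 := by
    rw [Matrix.mulVec_sub, huv, sub_self]
  exact sub_eq_zero.mp (hker _ h1)

lemma isStable_transpose {k : ℕ} {M : Matrix (Fin k) (Fin k) ℝ} (h : IsStableMat M) :
    IsStableMat Mᵀ := by
  intro μ hμ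
  apply h
  rw [Matrix.transpose_map] at hμ
  exact spectrum_transpose_mem hμ

lemma lyap_symm {r : ℕ} {B Z C : Matrix (Fin r) (Fin r) ℝ} (hB : IsStableMat B)
    (hC : Cᵀ = C) (h : B * Z + Z * Bᵀ = C) : Zᵀ = Z := by
  have h2 := congrArg Matrix.transpose h
  rw [Matrix.transpose_add, Matrix.transpose_mul, Matrix.transpose_mul,
    Matrix.transpose_transpose, hC] at h2
  have hdiff : B * (Z - Zᵀ) + (Z - Zᵀ) * Bᵀ = 0 := by
    rw [Matrix.mul_sub, Matrix.sub_mul]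
    have e : B * Z - B * Zᵀ + (Z * Bᵀ - Zᵀ * Bᵀ)
        = (B * Z + Z * Bᵀ) - (Zᵀ * Bᵀ + B * Zᵀ) := by abel
    rw [e, h, h2, sub_self]
  have h3 : Z - Zᵀ = 0 := sylvester_real hB hB hdiff
  exact (sub_eq_zero.mp h3).symm


lemma trace_deriv {m : Type*} [Fintype m] {f : ℝ → Matrix m m ℝ} {f' : Matrix m m ℝ}
    (hf : EDeriv f f') : HasDerivAt (fun ε => (f ε).trace) f'.trace 0 := by
  have h := HasDerivAt.fun_sum (u := Finset.univ) fun i _ => hf i i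
  have e1 : (fun ε => (f ε).trace) = fun ε => ∑ i, f ε i i := by
    funext ε; simp [Matrix.trace, Matrix.diag]
  have e2 : f'.trace = ∑ i, f' i i := by simp [Matrix.trace, Matrix.diag]
  rw [e1, e2]
  exact h

lemma trace_transpose_mul_deriv {l m : Type*} [Fintype l] [Fintype m]
    {f g : ℝ → Matrix l m ℝ} {f' g' F G : Matrix l m ℝ}
    (hf : EDeriv f f') (hg : EDeriv g g') (hF : f 0 = F) (hG : g 0 = G) :
    HasDerivAt (fun ε => ((f ε)ᵀ * g ε).trace) ((f'ᵀ * G).trace + (Fᵀ * g').trace) 0 := by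
  have h : HasDerivAt (fun ε => ∑ j, ∑ i, f ε i j * g ε i j)
      (∑ j, ∑ i, (f' i j * G i j + F i j * g' i j)) 0 := by
    refine HasDerivAt.fun_sum fun j _ => HasDerivAt.fun_sum fun i _ => ?_
    have hh := (hf i j).fun_mul (hg i j)
    simp only [hF, hG] at hh
    exact hh
  have e1 : (fun ε => ((f ε)ᵀ * g ε).trace) = fun ε => ∑ j, ∑ i, f ε i j * g ε i j := by
    funext ε
    simp [Matrix.trace, Matrix.diag, Matrix.mul_apply, Matrix.transpose_apply]
  have e2 : (f'ᵀ * G).trace + (Fᵀ * g').trace = ∑ j, ∑ i, (f' i j * G i j + F i j * g' i j) := by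
    simp [Matrix.trace, Matrix.diag, Matrix.mul_apply, Matrix.transpose_apply,
      Finset.sum_add_distrib]
  rw [e1, e2]
  exact h


end PhiGrad

open PhiGrad

theorem gradient_of_functional_Phi {n r : ℕ}
    (A X : Matrix (Fin n) (Fin n) ℝ) (y₀ : Fin n → ℝ)
    (hA : IsStableMat A)
    (hX : A * X + X * Aᵀ = -vecMulVec y₀ y₀)
    (U : Matrix (Fin n) (Fin r) ℝ) (hU : Uᵀ * U = 1)
    (hB : IsStableMat (Uᵀ * A * U))
    (Zf : Matrix (Fin n) (Fin r) ℝ → Matrix (Fin r) (Fin r) ℝ)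
    (Pf : Matrix (Fin n) (Fin r) ℝ → Matrix (Fin n) (Fin r) ℝ)
    (hZf : ∀ᶠ V in nhds U,
      (Vᵀ * A * V) * Zf V + Zf V * (Vᵀ * A * V)ᵀ = -vecMulVec (Vᵀ *ᵥ y₀) (Vᵀ *ᵥ y₀))
    (hPf : ∀ᶠ V in nhds U,
      A * Pf V + Pf V * (Vᵀ * A * V)ᵀ = -vecMulVec y₀ (Vᵀ *ᵥ y₀))
    (P_U : Matrix (Fin n) (Fin r) ℝ)
    (hPU : Aᵀ * P_U + P_U * (Uᵀ * A * U) = -U)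
    (Z_I : Matrix (Fin r) (Fin r) ℝ)
    (hZI : (Uᵀ * A * U)ᵀ * Z_I + Z_I * (Uᵀ * A * U) = -1)
    (D : Matrix (Fin n) (Fin r) ℝ) :
    HasDerivAt
      (fun ε : ℝ => X.trace + (Zf (U + ε • D)).trace
        - 2 * ((U + ε • D)ᵀ * Pf (U + ε • D)).trace)
      ((Dᵀ * ((-2 : ℝ) • Pf U
        + (2 : ℝ) • vecMulVec y₀ (((Uᵀ *ᵥ y₀) ᵥ* Z_I) - (y₀ ᵥ* P_U))
        + (2 : ℝ) • (A * U * (Zf U * Z_I - (Pf U)ᵀ * P_U))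
        + (2 : ℝ) • (Aᵀ * U * (Z_I * Zf U - P_Uᵀ * Pf U)))).trace)
      0 := by
  classical
  have hV0 : U + (0 : ℝ) • D = U := by simp
  have hVcont : Continuous (fun ε : ℝ => U + ε • D) :=
    continuous_const.add (continuous_id.smul continuous_const)
  have htend : Filter.Tendsto (fun ε : ℝ => U + ε • D) (nhds 0) (nhds U) := by
    have h := hVcont.tendsto 0
    rwa [hV0] at h
  have hZev := htend.eventually hZf
  have hPev := htend.eventually hPf
  -- entrywise derivative of V
  have hVder : EDeriv (fun ε : ℝ => U + ε • D) D := by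
    intro i j
    have h : HasDerivAt (fun ε : ℝ => U i j + ε * D i j) (D i j) 0 := by
      simpa using ((hasDerivAt_id (0 : ℝ)).mul_const (D i j)).const_add (U i j)
    simpa [Matrix.add_apply, Matrix.smul_apply, smul_eq_mul] using h
  -- derivative of B(V) = VᵀAV
  have hBder : EDeriv (fun ε : ℝ => (U + ε • D)ᵀ * A * (U + ε • D))
      (Dᵀ * A * U + Uᵀ * A * D) := by
    have h1 : EDeriv (fun ε : ℝ => (U + ε • D)ᵀ * A) (Dᵀ * A) :=
      (hVder.transpose).mul_const A
    have h2 := h1.mul hVder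
    refine h2.congr_deriv ?_
    show Dᵀ * A * (U + (0:ℝ) • D) + (U + (0:ℝ) • D)ᵀ * A * D = _
    rw [hV0]
  -- derivative of c(V) = Vᵀ y₀
  have hcder : VDeriv (fun ε : ℝ => (U + ε • D)ᵀ *ᵥ y₀) (Dᵀ *ᵥ y₀) :=
    (hVder.transpose).mulVec y₀
  -- derivative of -c cᵀ
  have hvv : EDeriv (fun ε : ℝ => vecMulVec ((U + ε • D)ᵀ *ᵥ y₀) ((U + ε • D)ᵀ *ᵥ y₀))
      (vecMulVec (Dᵀ *ᵥ y₀) (Uᵀ *ᵥ y₀) + vecMulVec (Uᵀ *ᵥ y₀) (Dᵀ *ᵥ y₀)) := by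
    refine (hcder.vecMulVec hcder).congr_deriv ?_
    show vecMulVec (Dᵀ *ᵥ y₀) ((U + (0:ℝ) • D)ᵀ *ᵥ y₀)
        + vecMulVec ((U + (0:ℝ) • D)ᵀ *ᵥ y₀) (Dᵀ *ᵥ y₀) = _
    rw [hV0]
  have hbZder : EDeriv (fun ε : ℝ => -vecMulVec ((U + ε • D)ᵀ *ᵥ y₀) ((U + ε • D)ᵀ *ᵥ y₀))
      (-(vecMulVec (Dᵀ *ᵥ y₀) (Uᵀ *ᵥ y₀) + vecMulVec (Uᵀ *ᵥ y₀) (Dᵀ *ᵥ y₀))) := hvv.neg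
  -- ### the Z system
  obtain ⟨wZ', hrelZ, hdZ⟩ := implicit_linear
    (K := fun ε : ℝ => ((U + ε • D)ᵀ * A * (U + ε • D)) ⊗ₖ (1 : Matrix (Fin r) (Fin r) ℝ)
      + (1 : Matrix (Fin r) (Fin r) ℝ) ⊗ₖ ((U + ε • D)ᵀ * A * (U + ε • D)))
    (K' := (Dᵀ * A * U + Uᵀ * A * D) ⊗ₖ (1 : Matrix (Fin r) (Fin r) ℝ)
      + (1 : Matrix (Fin r) (Fin r) ℝ) ⊗ₖ (Dᵀ * A * U + Uᵀ * A * D))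
    (b := fun ε x => (-vecMulVec ((U + ε • D)ᵀ *ᵥ y₀) ((U + ε • D)ᵀ *ᵥ y₀)
      : Matrix (Fin r) (Fin r) ℝ) x.1 x.2)
    (b' := fun x => (-(vecMulVec (Dᵀ *ᵥ y₀) (Uᵀ *ᵥ y₀) + vecMulVec (Uᵀ *ᵥ y₀) (Dᵀ *ᵥ y₀))
      : Matrix (Fin r) (Fin r) ℝ) x.1 x.2)
    (w := fun ε x => Zf (U + ε • D) x.1 x.2)
    (fun i j => ((hBder.kron_const 1).add (hBder.const_kron 1)) i j)
    (fun x => hbZder x.1 x.2)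
    (by simp only [hV0]; exact isUnit_kron hB hB)
    (by
      filter_upwards [hZev] with ε hε
      funext x
      obtain ⟨i, j⟩ := x
      rw [kron_mulVec, hε])
  set Zd : Matrix (Fin r) (Fin r) ℝ := Matrix.of fun i j => wZ' (i, j) with hZd
  simp only [hV0] at hrelZ
  have R1 : (Uᵀ * A * U) * Zd + Zd * (Uᵀ * A * U)ᵀ
      + ((Dᵀ * A * U + Uᵀ * A * D) * Zf U + Zf U * (Dᵀ * A * U + Uᵀ * A * D)ᵀ)
      = -(vecMulVec (Dᵀ *ᵥ y₀) (Uᵀ *ᵥ y₀) + vecMulVec (Uᵀ *ᵥ y₀) (Dᵀ *ᵥ y₀)) := by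
    ext i j
    have h := congrFun hrelZ (i, j)
    rw [Pi.add_apply] at h
    have e1 : (((Uᵀ * A * U) ⊗ₖ (1 : Matrix (Fin r) (Fin r) ℝ)
        + (1 : Matrix (Fin r) (Fin r) ℝ) ⊗ₖ (Uᵀ * A * U)) *ᵥ wZ') (i, j)
        = ((Uᵀ * A * U) * Zd + Zd * (Uᵀ * A * U)ᵀ) i j := by
      have e : wZ' = fun x : Fin r × Fin r => Zd x.1 x.2 := rfl
      rw [e]
      exact kron_mulVec _ _ _ i j
    have e2 : (((Dᵀ * A * U + Uᵀ * A * D) ⊗ₖ (1 : Matrix (Fin r) (Fin r) ℝ)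
        + (1 : Matrix (Fin r) (Fin r) ℝ) ⊗ₖ (Dᵀ * A * U + Uᵀ * A * D)) *ᵥ
          (fun x : Fin r × Fin r => Zf U x.1 x.2)) (i, j)
        = ((Dᵀ * A * U + Uᵀ * A * D) * Zf U + Zf U * (Dᵀ * A * U + Uᵀ * A * D)ᵀ) i j :=
      kron_mulVec _ _ _ i j
    rw [Matrix.add_apply, ← e1, ← e2]
    exact h
  -- ### the P system
  obtain ⟨wP', hrelP, hdP⟩ := implicit_linear
    (K := fun ε : ℝ => A ⊗ₖ (1 : Matrix (Fin r) (Fin r) ℝ)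
      + (1 : Matrix (Fin n) (Fin n) ℝ) ⊗ₖ ((U + ε • D)ᵀ * A * (U + ε • D)))
    (K' := (0 : Matrix (Fin n) (Fin n) ℝ) ⊗ₖ (1 : Matrix (Fin r) (Fin r) ℝ)
      + (1 : Matrix (Fin n) (Fin n) ℝ) ⊗ₖ (Dᵀ * A * U + Uᵀ * A * D))
    (b := fun ε x => (-vecMulVec y₀ ((U + ε • D)ᵀ *ᵥ y₀) : Matrix (Fin n) (Fin r) ℝ) x.1 x.2)
    (b' := fun x => (-vecMulVec y₀ (Dᵀ *ᵥ y₀) : Matrix (Fin n) (Fin r) ℝ) x.1 x.2)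
    (w := fun ε x => Pf (U + ε • D) x.1 x.2)
    (fun i j => (((EDeriv.const (A ⊗ₖ (1 : Matrix (Fin r) (Fin r) ℝ))).add
      (hBder.const_kron 1)).congr_deriv (by rw [Matrix.zero_kronecker]) i j))
    (fun x => ((VDeriv.vecMulVec (fun i => hasDerivAt_const 0 (y₀ i)) hcder).congr_deriv
      (by
        show vecMulVec (0 : Fin n → ℝ) ((U + (0:ℝ) • D)ᵀ *ᵥ y₀) + vecMulVec y₀ (Dᵀ *ᵥ y₀) = _
        ext a c
        simp [Matrix.vecMulVec_apply])).neg x.1 x.2)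
    (by simp only [hV0]; exact isUnit_kron hA hB)
    (by
      filter_upwards [hPev] with ε hε
      funext x
      obtain ⟨i, j⟩ := x
      rw [kron_mulVec, hε])
  set Pd : Matrix (Fin n) (Fin r) ℝ := Matrix.of fun i j => wP' (i, j) with hPd
  simp only [hV0] at hrelP
  have R2 : A * Pd + Pd * (Uᵀ * A * U)ᵀ + Pf U * (Dᵀ * A * U + Uᵀ * A * D)ᵀ
      = -vecMulVec y₀ (Dᵀ *ᵥ y₀) := by
    have R2' : A * Pd + Pd * (Uᵀ * A * U)ᵀ
        + ((0 : Matrix (Fin n) (Fin n) ℝ) * Pf U + Pf U * (Dᵀ * A * U + Uᵀ * A * D)ᵀ)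
        = -vecMulVec y₀ (Dᵀ *ᵥ y₀) := by
      ext i j
      have h := congrFun hrelP (i, j)
      rw [Pi.add_apply] at h
      have e1 : ((A ⊗ₖ (1 : Matrix (Fin r) (Fin r) ℝ)
          + (1 : Matrix (Fin n) (Fin n) ℝ) ⊗ₖ (Uᵀ * A * U)) *ᵥ wP') (i, j)
          = (A * Pd + Pd * (Uᵀ * A * U)ᵀ) i j := by
        have e : wP' = fun x : Fin n × Fin r => Pd x.1 x.2 := rfl
        rw [e]
        exact kron_mulVec _ _ _ i j
      have e2 : (((0 : Matrix (Fin n) (Fin n) ℝ) ⊗ₖ (1 : Matrix (Fin r) (Fin r) ℝ)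
          + (1 : Matrix (Fin n) (Fin n) ℝ) ⊗ₖ (Dᵀ * A * U + Uᵀ * A * D)) *ᵥ
            (fun x : Fin n × Fin r => Pf U x.1 x.2)) (i, j)
          = ((0 : Matrix (Fin n) (Fin n) ℝ) * Pf U
            + Pf U * (Dᵀ * A * U + Uᵀ * A * D)ᵀ) i j :=
        kron_mulVec _ _ _ i j
      rw [Matrix.add_apply, ← e1, ← e2]
      exact h
    rw [Matrix.zero_mul, zero_add] at R2'
    exact R2'
  -- ### symmetry of Z and Z_I
  have hZU : (Uᵀ * A * U) * Zf U + Zf U * (Uᵀ * A * U)ᵀ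
      = -vecMulVec (Uᵀ *ᵥ y₀) (Uᵀ *ᵥ y₀) := hZf.self_of_nhds
  have S1 : (Zf U)ᵀ = Zf U :=
    lyap_symm hB (by rw [Matrix.transpose_neg, vecMulVec_transpose]) hZU
  have S2 : Z_Iᵀ = Z_I :=
    lyap_symm (isStable_transpose hB) (by rw [Matrix.transpose_neg, Matrix.transpose_one])
      (by rw [Matrix.transpose_transpose]; exact hZI)
  -- ### assemble the derivative
  have hdZE : EDeriv (fun ε : ℝ => Zf (U + ε • D)) Zd := fun i j => hdZ (i, j)
  have hdPE : EDeriv (fun ε : ℝ => Pf (U + ε • D)) Pd := fun i j => hdP (i, j)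
  have htrZ : HasDerivAt (fun ε : ℝ => (Zf (U + ε • D)).trace) Zd.trace 0 :=
    trace_deriv hdZE
  have htrP : HasDerivAt (fun ε : ℝ => ((U + ε • D)ᵀ * Pf (U + ε • D)).trace)
      ((Dᵀ * Pf U).trace + (Uᵀ * Pd).trace) 0 :=
    trace_transpose_mul_deriv hVder hdPE hV0 (by rw [hV0])
  have hcomb := (htrZ.const_add X.trace).sub (htrP.const_mul 2)
  have hval : Zd.trace - 2 * ((Dᵀ * Pf U).trace + (Uᵀ * Pd).trace)
      = (Dᵀ * ((-2 : ℝ) • Pf U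
        + (2 : ℝ) • vecMulVec y₀ (((Uᵀ *ᵥ y₀) ᵥ* Z_I) - (y₀ ᵥ* P_U))
        + (2 : ℝ) • (A * U * (Zf U * Z_I - (Pf U)ᵀ * P_U))
        + (2 : ℝ) • (Aᵀ * U * (Z_I * Zf U - P_Uᵀ * Pf U)))).trace :=
    trace_identity A U D (Pf U) P_U Pd (Uᵀ * A * U) (Zf U) Z_I Zd y₀ (Uᵀ *ᵥ y₀) (Dᵀ *ᵥ y₀)
      rfl R1 R2 hZI hPU S1 S2
  rw [← hval]
  exact hcomb
end
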